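/- Let φ ∈ L^∞(ℝⁿ) with φ ≥ 0 and let U_a denote translation, (U_a f)(x) = f(x+a), on L²(ℝⁿ). Then U_a φ(Q) U_a* converges weakly to 0 as |a| → ∞ if and only if φ(Q) U_a converges strongly to 0 as |a| → ∞. -/

import Mathlib

open MeasureTheory Filter Complex

/-- For `0 ≤ φ ≤ C` in `L^∞(ℝⁿ)`, the operators `U_a φ(Q) U_a*` (multiplication by
`φ(·+a)`) converge weakly to `0` as `|a| → ∞` iff `φ(Q) U_a → 0` strongly. -/
theorem stmt7 (n : ℕ) (φ : EuclideanSpace ℝ (Fin n) → ℝ) (hmeas : Measurable φ)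
    (C : ℝ) (hφ : ∀ x, 0 ≤ φ x ∧ φ x ≤ C) :
    (∀ f g : EuclideanSpace ℝ (Fin n) → ℂ, MemLp f 2 volume → MemLp g 2 volume →
        Tendsto (fun a => ∫ x, (starRingEnd ℂ) (f x) * (↑(φ (x + a)) * g x))
          (Bornology.cobounded (EuclideanSpace ℝ (Fin n))) (nhds 0)) ↔
      (∀ f : EuclideanSpace ℝ (Fin n) → ℂ, MemLp f 2 volume →
        Tendsto (fun a => ∫ x, (φ x) ^ 2 * ‖f (x + a)‖ ^ 2)
          (Bornology.cobounded (EuclideanSpace ℝ (Fin n))) (nhds 0)) := by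
  have hC : 0 ≤ C := le_trans (hφ 0).1 (hφ 0).2
  have key : ∀ (f : EuclideanSpace ℝ (Fin n) → ℂ) (a : EuclideanSpace ℝ (Fin n)),
      ∫ x, φ x ^ 2 * ‖f (x + a)‖ ^ 2 = ∫ x, φ (x - a) ^ 2 * ‖f x‖ ^ 2 := by
    intro f a
    rw [← integral_add_right_eq_self (fun x => φ (x - a) ^ 2 * ‖f x‖ ^ 2) a]
    simp
  have conj_mul : ∀ (c : ℝ) (z : ℂ), (starRingEnd ℂ) z * (↑c * z) = ((c * ‖z‖ ^ 2 : ℝ) : ℂ) := by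
    intro c z; push_cast
    rw [mul_comm ((starRingEnd ℂ) z), mul_assoc, Complex.mul_conj']
  constructor
  · intro hw f hf
    have h1 := hw f f hf hf
    have h2 : Tendsto (fun a => ∫ x, φ (x + a) * ‖f x‖ ^ 2)
        (Bornology.cobounded (EuclideanSpace ℝ (Fin n))) (nhds 0) := by
      have he : ∀ a : EuclideanSpace ℝ (Fin n),
          (∫ x, (starRingEnd ℂ) (f x) * (↑(φ (x + a)) * f x))
            = ((∫ x, φ (x + a) * ‖f x‖ ^ 2 : ℝ) : ℂ) := by
        intro a
        calc (∫ x, (starRingEnd ℂ) (f x) * (↑(φ (x + a)) * f x))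
            = ∫ x, ((φ (x + a) * ‖f x‖ ^ 2 : ℝ) : ℂ) :=
              integral_congr_ae (Filter.Eventually.of_forall fun x => conj_mul _ _)
          _ = ((∫ x, φ (x + a) * ‖f x‖ ^ 2 : ℝ) : ℂ) :=
              integral_ofReal (f := fun x => φ (x + a) * ‖f x‖ ^ 2)
      simp_rw [he] at h1
      have := (Complex.continuous_re.tendsto 0).comp h1
      simpa [Function.comp_def] using this
    have h3 : Tendsto (fun a => ∫ x, φ (x - a) * ‖f x‖ ^ 2)
        (Bornology.cobounded (EuclideanSpace ℝ (Fin n))) (nhds 0) := by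
      exact (h2.comp tendsto_neg_cobounded).congr fun a => by
        simp only [Function.comp_apply, ← sub_eq_add_neg]
    have hf2 : Integrable (fun x => ‖f x‖ ^ 2) volume := by
      have := hf.integrable_norm_rpow two_ne_zero ENNReal.ofNat_ne_top
      simpa [ENNReal.toReal_ofNat, Real.rpow_natCast] using this
    have hint : ∀ a : EuclideanSpace ℝ (Fin n),
        Integrable (fun x => φ (x - a) * ‖f x‖ ^ 2) volume := by
      intro a
      exact hf2.bdd_mul ((hmeas.comp (measurable_sub_const a)).aestronglyMeasurable)
        (c := C) (Filter.Eventually.of_forall fun x => by rw [Real.norm_of_nonneg (hφ _).1]; exact (hφ _).2)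
    refine squeeze_zero' (g := fun a => C * ∫ x, φ (x - a) * ‖f x‖ ^ 2)
      (Filter.Eventually.of_forall fun a => ?_)
      (Filter.Eventually.of_forall fun a => ?_) ?_
    · exact integral_nonneg fun x => mul_nonneg (sq_nonneg _) (sq_nonneg _)
    · show (∫ x, φ x ^ 2 * ‖f (x + a)‖ ^ 2) ≤ C * ∫ x, φ (x - a) * ‖f x‖ ^ 2
      rw [key f a, ← integral_const_mul]
      refine integral_mono_of_nonneg
        (Filter.Eventually.of_forall fun x => mul_nonneg (sq_nonneg _) (sq_nonneg _))
        ((hint a).const_mul C) (Filter.Eventually.of_forall fun x => ?_)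
      have h4 : φ (x - a) ^ 2 ≤ C * φ (x - a) := by
        rw [sq]
        exact mul_le_mul_of_nonneg_right (hφ _).2 (hφ _).1
      calc φ (x - a) ^ 2 * ‖f x‖ ^ 2 ≤ (C * φ (x - a)) * ‖f x‖ ^ 2 :=
            mul_le_mul_of_nonneg_right h4 (sq_nonneg _)
        _ = C * (φ (x - a) * ‖f x‖ ^ 2) := by ring
    · simpa using h3.const_mul C
  · intro hs f g hf hg
    have hKf : Tendsto (fun a => ∫ x, φ (x + a) ^ 2 * ‖f x‖ ^ 2)
        (Bornology.cobounded (EuclideanSpace ℝ (Fin n))) (nhds 0) := by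
      have h1 := hs f hf
      simp_rw [key f] at h1
      exact (h1.comp tendsto_neg_cobounded).congr fun a => by
        simp only [Function.comp_apply, sub_neg_eq_add]
    have hfa : ∀ a : EuclideanSpace ℝ (Fin n),
        MemLp (fun x => φ (x + a) * ‖f x‖) (ENNReal.ofReal 2) volume := by
      intro a
      rw [ENNReal.ofReal_ofNat]
      refine MemLp.of_le_mul (c := C) hf.norm
        (((hmeas.comp (measurable_add_const a)).aestronglyMeasurable).mul
          hf.aestronglyMeasurable.norm)
        (Filter.Eventually.of_forall fun x => ?_)
      rw [Real.norm_of_nonneg (mul_nonneg (hφ _).1 (norm_nonneg _)), norm_norm]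
      exact mul_le_mul_of_nonneg_right (hφ _).2 (norm_nonneg _)
    have hga : MemLp (fun x => ‖g x‖) (ENNReal.ofReal 2) volume := by
      rw [ENNReal.ofReal_ofNat]; exact hg.norm
    refine squeeze_zero_norm (f := fun a => ∫ x, (starRingEnd ℂ) (f x) * (↑(φ (x + a)) * g x))
      (a := fun a => (∫ x, φ (x + a) ^ 2 * ‖f x‖ ^ 2) ^ (1/2 : ℝ)
        * (∫ x, ‖g x‖ ^ (2:ℝ)) ^ (1/2 : ℝ)) (fun a => ?_) ?_
    · calc ‖∫ x, (starRingEnd ℂ) (f x) * (↑(φ (x + a)) * g x)‖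
          ≤ ∫ x, ‖(starRingEnd ℂ) (f x) * (↑(φ (x + a)) * g x)‖ :=
            norm_integral_le_integral_norm _
        _ = ∫ x, (φ (x + a) * ‖f x‖) * ‖g x‖ := by
            refine integral_congr_ae (Filter.Eventually.of_forall fun x => ?_)
            simp only [norm_mul, RCLike.norm_conj, Complex.norm_real,
              Real.norm_of_nonneg (hφ _).1]
            ring
        _ ≤ (∫ x, (φ (x + a) * ‖f x‖) ^ (2:ℝ)) ^ (1/2 : ℝ)
              * (∫ x, ‖g x‖ ^ (2:ℝ)) ^ (1/2 : ℝ) :=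
            integral_mul_le_Lp_mul_Lq_of_nonneg ⟨by norm_num, by norm_num, by norm_num⟩
              (Filter.Eventually.of_forall fun x => mul_nonneg (hφ _).1 (norm_nonneg _))
              (Filter.Eventually.of_forall fun x => norm_nonneg _) (hfa a) hga
        _ = (∫ x, φ (x + a) ^ 2 * ‖f x‖ ^ 2) ^ (1/2 : ℝ)
              * (∫ x, ‖g x‖ ^ (2:ℝ)) ^ (1/2 : ℝ) := by
            congr 1
            congr 1
            refine integral_congr_ae (Filter.Eventually.of_forall fun x => ?_)
            show (φ (x + a) * ‖f x‖) ^ (2:ℝ) = φ (x + a) ^ 2 * ‖f x‖ ^ 2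
            rw [show ((2:ℝ)) = ((2:ℕ):ℝ) by norm_num, Real.rpow_natCast, mul_pow]
    · have hc : Tendsto (fun a => (∫ x, φ (x + a) ^ 2 * ‖f x‖ ^ 2) ^ (1/2 : ℝ))
          (Bornology.cobounded (EuclideanSpace ℝ (Fin n))) (nhds 0) := by
        have h5 := ((Real.continuousAt_rpow_const 0 (1/2) (Or.inr (by norm_num))).tendsto).comp hKf
        rw [Real.zero_rpow (by norm_num : (1/2:ℝ) ≠ 0)] at h5
        exact h5.congr fun a => by simp only [Function.comp_apply]
      simpa using hc.mul_const _
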